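/- For every directed graph E, the graph inverse semigroup G(E) embeds (as a semigroup, via an injective homomorphism) into the polycyclic monoid P_λ, where λ = max{|E^0|, |E^1|, ω}. -/

import Mathlib

universe u

/-- A directed graph. -/
structure DiGraph : Type (u + 1) where
  V : Type u
  E : Type u
  s : E → V
  r : E → V

namespace DiGraph

variable (G : DiGraph.{u})

/-- A list of edges forms a valid path starting at vertex `v`. -/
def Valid (v : G.V) : List G.E → Prop
  | [] => True
  | e :: l => G.s e = v ∧ Valid (G.r e) l

/-- the endpoint of a list of edges starting at `v`. -/
def dst (v : G.V) : List G.E → G.V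
  | [] => v
  | e :: l => dst (G.r e) l

variable {G}

lemma dst_append (v : G.V) (l₁ l₂ : List G.E) :
    G.dst v (l₁ ++ l₂) = G.dst (G.dst v l₁) l₂ := by
  induction l₁ generalizing v with
  | nil => rfl
  | cons e t ih => simp [dst, ih]

lemma valid_append (v : G.V) (l₁ l₂ : List G.E) :
    G.Valid v (l₁ ++ l₂) ↔ G.Valid v l₁ ∧ G.Valid (G.dst v l₁) l₂ := by
  induction l₁ generalizing v with
  | nil => simp [Valid, dst]
  | cons e t ih => simp [Valid, dst, ih, and_assoc]

variable (G) in
/-- A (finite, directed) path in `G`: a source vertex together with a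
composable list of edges.  Paths of length zero are the vertices. -/
structure GPath : Type u where
  src : G.V
  edges : List G.E
  valid : G.Valid src edges

/-- The range (end vertex) of a path. -/
def GPath.rng (p : G.GPath) : G.V := G.dst p.src p.edges

/-- Concatenation of composable paths. -/
def GPath.comp (p q : G.GPath) (h : p.rng = q.src) : G.GPath :=
  ⟨p.src, p.edges ++ q.edges, by
    rw [valid_append]
    exact ⟨p.valid, by rw [show G.dst p.src p.edges = q.src from h]; exact q.valid⟩⟩

lemma GPath.comp_rng (p q : G.GPath) (h : p.rng = q.src) : (p.comp q h).rng = q.rng := by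
  show G.dst p.src (p.edges ++ q.edges) = _
  rw [dst_append, show G.dst p.src p.edges = q.src from h]; rfl

/-- If `p` is a prefix of the path `q`, the remaining path (so that
`q = p.comp (p.strip q _ _)`). -/
def GPath.strip (p q : G.GPath) (hs : p.src = q.src) (hp : p.edges <+: q.edges) : G.GPath :=
  ⟨p.rng, q.edges.drop p.edges.length, by
    obtain ⟨t, ht⟩ := hp
    have h1 : p.edges ++ q.edges.drop p.edges.length = q.edges := by
      rw [← ht, List.drop_left]
    have h2 : G.Valid p.src (p.edges ++ q.edges.drop p.edges.length) := by
      rw [h1, hs]; exact q.valid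
    exact ((valid_append _ _ _).mp h2).2⟩

lemma GPath.strip_rng (p q : G.GPath) (hs : p.src = q.src) (hp : p.edges <+: q.edges) :
    (p.strip q hs hp).rng = q.rng := by
  show G.dst p.rng (q.edges.drop p.edges.length) = G.dst q.src q.edges
  obtain ⟨t, ht⟩ := hp
  have h1 : p.edges ++ q.edges.drop p.edges.length = q.edges := by
    rw [← ht, List.drop_left]
  conv_rhs => rw [← hs, ← h1]
  rw [dst_append]; rfl

variable (G) in
/-- A nonzero element `a b⁻¹` of the graph inverse semigroup: a pair of
paths with the same range. -/
structure NZ : Type u where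
  a : G.GPath
  b : G.GPath
  h : a.rng = b.rng

/-- The graph inverse semigroup `G(E)` over a directed graph, in normal form:
the elements `a b⁻¹` with `r(a) = r(b)`, together with a zero element. -/
def GIS (G : DiGraph.{u}) : Type u := Option (NZ G)

instance : Zero (GIS G) := ⟨none⟩

open scoped Classical in
/-- The multiplication of the graph inverse semigroup:
`a b⁻¹ · c d⁻¹ = a c₁ d⁻¹` if `c = b c₁`, `a (d b₁)⁻¹` if `b = c b₁`, and `0` otherwise. -/
noncomputable instance : Mul (GIS G) :=
  ⟨fun x y =>
    match x, y with
    | none, _ => none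
    | some _, none => none
    | some ⟨a, b, hab⟩, some ⟨c, d, hcd⟩ =>
      if h : b.src = c.src ∧ b.edges <+: c.edges then
        some ⟨a.comp (b.strip c h.1 h.2) hab, d, by
          exact (GPath.comp_rng _ _ _).trans ((GPath.strip_rng _ _ _ _).trans hcd)⟩
      else if h' : c.src = b.src ∧ c.edges <+: b.edges then
        some ⟨a, d.comp (c.strip b h'.1 h'.2) hcd.symm, by
          exact hab.trans ((GPath.comp_rng _ _ _).trans (GPath.strip_rng _ _ _ _)).symm⟩
      else none⟩

/-- The nonzero element `a b⁻¹` of `G(E)` determined by a pair of paths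
with the same range. -/
def GIS.nz (n : NZ G) : GIS G := some n

/-- The inversion of the graph inverse semigroup: `(u v⁻¹)⁻¹ = v u⁻¹`. -/
def GIS.inv : GIS G → GIS G
  | none => none
  | some ⟨a, b, h⟩ => some ⟨b, a, h.symm⟩

end DiGraph
namespace DiGraph

/-- The graph with one vertex and a loop for each element of `ι`. -/
def bouquet (ι : Type u) : DiGraph.{u} :=
  ⟨PUnit, ι, fun _ => PUnit.unit, fun _ => PUnit.unit⟩

/-- The polycyclic monoid `P_ι` on a set `ι` of generators, realized as the
graph inverse semigroup over the graph with one vertex and `ι` many loops. -/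
def PolyM (ι : Type u) : Type u := GIS (bouquet ι)

noncomputable instance (ι : Type u) : Mul (PolyM ι) :=
  inferInstanceAs (Mul (GIS (bouquet ι)))

instance (ι : Type u) : Zero (PolyM ι) := inferInstanceAs (Zero (GIS (bouquet ι)))

end DiGraph

namespace DiGraph

variable {G : DiGraph.{u}}

lemma GPath.ext' {p q : G.GPath} (h1 : p.src = q.src) (h2 : p.edges = q.edges) : p = q := by
  cases p; cases q; cases h1; cases h2; rfl

lemma NZ.ext' {x y : NZ G} (h1 : x.a = y.a) (h2 : x.b = y.b) : x = y := by
  cases x; cases y; cases h1; cases h2; rfl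

lemma bouquet_valid {ι : Type u} (v : (bouquet ι).V) (l : List ((bouquet ι).E)) :
    (bouquet ι).Valid v l := by
  induction l generalizing v with
  | nil => trivial
  | cons e t ih => exact ⟨rfl, ih _⟩

lemma map_prefix_iff {α β : Type*} {f : α → β} (hf : Function.Injective f) :
    ∀ (l1 l2 : List α), (l1.map f <+: l2.map f ↔ l1 <+: l2)
  | [], l2 => by simp
  | a :: t, [] => by simp
  | a :: t1, b :: t2 => by
    simp only [List.map_cons, List.cons_prefix_cons, hf.eq_iff, map_prefix_iff hf t1 t2]

/-- Encoding of a path in `G` as a path in the bouquet on `ι`. -/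
def enc {ι : Type u} (cV : G.V → ι) (cE : G.E → ι) (p : G.GPath) : (bouquet ι).GPath :=
  ⟨PUnit.unit, cV p.src :: p.edges.map cE, bouquet_valid _ _⟩

lemma enc_cond {ι : Type u} {cV : G.V → ι} {cE : G.E → ι}
    (hV : Function.Injective cV) (hE : Function.Injective cE) (b c : G.GPath) :
    ((enc cV cE b).src = (enc cV cE c).src ∧ (enc cV cE b).edges <+: (enc cV cE c).edges)
      ↔ (b.src = c.src ∧ b.edges <+: c.edges) := by
  simp only [enc, List.cons_prefix_cons, hV.eq_iff, map_prefix_iff hE, true_and]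
  exact (and_iff_right rfl).trans (List.cons_prefix_cons.trans (and_congr hV.eq_iff (map_prefix_iff hE _ _)))

instance {ι : Type u} : Subsingleton ((bouquet ι).V) := inferInstanceAs (Subsingleton PUnit)

/-- The embedding of `GIS G` into `PolyM ι`. -/
def encF {ι : Type u} (cV : G.V → ι) (cE : G.E → ι) : GIS G → PolyM ι
  | none => none
  | some n => some ⟨enc cV cE n.a, enc cV cE n.b, Subsingleton.elim _ _⟩

lemma enc_strip {ι : Type u} {cV : G.V → ι} {cE : G.E → ι}
    (hV : Function.Injective cV) (hE : Function.Injective cE) (a b c : G.GPath)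
    (hab : a.rng = b.rng)
    (h : b.src = c.src ∧ b.edges <+: c.edges)
    (h' : (enc cV cE b).src = (enc cV cE c).src ∧ (enc cV cE b).edges <+: (enc cV cE c).edges)
    (hab' hab'') :
    (enc cV cE a).comp ((enc cV cE b).strip (enc cV cE c) h'.1 h'.2) hab'
      = enc cV cE (a.comp (b.strip c h.1 h.2) hab'') := by
  apply GPath.ext' (Subsingleton.elim _ _)
  show (cV a.src :: a.edges.map cE) ++
      ((cV c.src :: c.edges.map cE).drop (cV b.src :: b.edges.map cE).length)
    = cV a.src :: (a.edges ++ c.edges.drop b.edges.length).map cE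
  simp [List.map_append, List.map_drop]

lemma encF_mul {ι : Type u} {cV : G.V → ι} {cE : G.E → ι}
    (hV : Function.Injective cV) (hE : Function.Injective cE) (x y : GIS G) :
    encF cV cE (x * y) = encF cV cE x * encF cV cE y := by
  match x, y with
  | none, y => rfl
  | some n, none => rfl
  | some ⟨a, b, hab⟩, some ⟨c, d, hcd⟩ =>
    show encF cV cE (Mul.mul _ _) = Mul.mul _ _
    simp only [Mul.mul, encF]
    simp only [instMulPolyM._aux_1]
    by_cases h : b.src = c.src ∧ b.edges <+: c.edges
    · erw [dif_pos h, dif_pos ((enc_cond hV hE b c).mpr h)]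
      simp only [encF]
      refine congrArg some (NZ.ext' ?_ rfl)
      exact (enc_strip hV hE a b c hab h ((enc_cond hV hE b c).mpr h) (Subsingleton.elim _ _) hab).symm
    · erw [dif_neg h, dif_neg (fun hh => h ((enc_cond hV hE b c).mp hh))]
      by_cases h2 : c.src = b.src ∧ c.edges <+: b.edges
      · erw [dif_pos h2, dif_pos ((enc_cond hV hE c b).mpr h2)]
        simp only [encF]
        refine congrArg some (NZ.ext' rfl ?_)
        exact (enc_strip hV hE d c b hcd.symm h2 ((enc_cond hV hE c b).mpr h2) (Subsingleton.elim _ _) hcd.symm).symm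
      · erw [dif_neg h2, dif_neg (fun hh => h2 ((enc_cond hV hE c b).mp hh))]

lemma enc_injective {ι : Type u} {cV : G.V → ι} {cE : G.E → ι}
    (hV : Function.Injective cV) (hE : Function.Injective cE) :
    Function.Injective (enc (G := G) cV cE) := by
  intro p q h
  have h2 : cV p.src :: p.edges.map cE = cV q.src :: q.edges.map cE := congrArg GPath.edges h
  simp only [List.cons.injEq, hV.eq_iff, (List.map_injective_iff.mpr hE).eq_iff] at h2
  exact GPath.ext' h2.1 h2.2

lemma encF_injective {ι : Type u} {cV : G.V → ι} {cE : G.E → ι}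
    (hV : Function.Injective cV) (hE : Function.Injective cE) :
    Function.Injective (encF (G := G) cV cE) := by
  intro x y h
  match x, y with
  | none, none => rfl
  | none, some _ => simp [encF] at h
  | some _, none => simp [encF] at h
  | some m, some n =>
    simp only [encF] at h
    injection h with h
    have h1 := congrArg NZ.a h
    have h2 := congrArg NZ.b h
    exact congrArg some
      (NZ.ext' (enc_injective hV hE h1) (enc_injective hV hE h2))

end DiGraph

open DiGraph in
/-- For every directed graph `E`, the graph inverse semigroup `G(E)` embeds
(via an injective homomorphism) into the polycyclic monoid `P_λ`, where
`λ = max{|E⁰|, |E¹|, ω}`. -/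
theorem gis_embeds_polycyclic (G : DiGraph.{u}) :
    ∃ f : GIS G →ₙ* PolyM ((max (max (Cardinal.mk G.V) (Cardinal.mk G.E)) Cardinal.aleph0).out),
      Function.Injective f := by
  set ι := (max (max (Cardinal.mk G.V) (Cardinal.mk G.E)) Cardinal.aleph0).out
  have hmk : Cardinal.mk ι = max (max (Cardinal.mk G.V) (Cardinal.mk G.E)) Cardinal.aleph0 :=
    Cardinal.mk_out _
  have hV : Cardinal.mk G.V ≤ Cardinal.mk ι := by
    rw [hmk]; exact le_max_of_le_left (le_max_left _ _)
  have hE : Cardinal.mk G.E ≤ Cardinal.mk ι := by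
    rw [hmk]; exact le_max_of_le_left (le_max_right _ _)
  obtain ⟨fV⟩ := Cardinal.le_def _ _ |>.mp hV
  obtain ⟨fE⟩ := Cardinal.le_def _ _ |>.mp hE
  exact ⟨⟨encF fV fE, encF_mul fV.injective fE.injective⟩,
    encF_injective fV.injective fE.injective⟩
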